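/- Assume ε ∈ {1,−1}, ξ ∉ {0, 1/6}, εξ(1−6ξ) > 0, and let λ* ∈ ℝ satisfy z(λ*)² = 1/(6εξ(1−6ξ)). Suppose (1−6ξ)(2ξλ*z(λ*) + 1 + w_m) ≠ 0 and 2ξ(1−3w_m)/((1−6ξ)(2ξλ*z(λ*) + 1 + w_m)) ≥ 0, and set y* = √(2ξ(1−3w_m)/((1−6ξ)(2ξλ*z(λ*) + 1 + w_m))). Then F(0, y*, λ*) = (0,0,0), i.e. the point 2b (slow-roll inflation) is an equilibrium of the system. -/

import Mathlib

open Polynomial Filter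

/-- The factor `D(λ) = 1 − 6εξ(1−6ξ)z(λ)²` coming from the time reparametrization. -/
noncomputable def Dfun (ε ξ : ℝ) (z : ℝ → ℝ) (l : ℝ) : ℝ :=
  1 - 6*ε*ξ*(1-6*ξ)*(z l)^2

/-- The common bracket
`B(x,y,λ) = −4/3 − 2ξλy²z(λ) + ε(1−6ξ)(1−w_m)x² + 2εξ(1−3w_m)(x+z(λ))² + (1+w_m)(1−y²)`. -/
noncomputable def Bfun (ε ξ wm : ℝ) (z : ℝ → ℝ) (x y l : ℝ) : ℝ :=
  -4/3 - 2*ξ*l*y^2*(z l) + ε*(1-6*ξ)*(1-wm)*x^2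
    + 2*ε*ξ*(1-3*wm)*(x + z l)^2 + (1+wm)*(1-y^2)

/-- First component of the vector field:
`f₁ = −(x − (ε/2)λy²)·D(λ) + (3/2)(x + 6ξz(λ))·B(x,y,λ)`. -/
noncomputable def f1 (ε ξ wm : ℝ) (z : ℝ → ℝ) (x y l : ℝ) : ℝ :=
  -(x - ε/2*l*y^2) * Dfun ε ξ z l + 3/2*(x + 6*ξ*(z l)) * Bfun ε ξ wm z x y l

/-- Second component: `f₂ = y(2 − (1/2)λx)·D(λ) + (3/2)y·B(x,y,λ)`. -/
noncomputable def f2 (ε ξ wm : ℝ) (z : ℝ → ℝ) (x y l : ℝ) : ℝ :=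
  y*(2 - 1/2*l*x) * Dfun ε ξ z l + 3/2*y * Bfun ε ξ wm z x y l

/-- Third component: `f₃ = x·D(λ)/z′(λ)`. -/
noncomputable def f3 (ε ξ : ℝ) (z : ℝ → ℝ) (x y l : ℝ) : ℝ :=
  x * Dfun ε ξ z l / deriv z l

/-- The full vector field `F(x,y,λ) = (f₁,f₂,f₃)` of the reduced cosmological system. -/
noncomputable def Fvec (ε ξ wm : ℝ) (z : ℝ → ℝ) (x y l : ℝ) : ℝ × ℝ × ℝ :=
  (f1 ε ξ wm z x y l, f2 ε ξ wm z x y l, f3 ε ξ z x y l)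

/-- The effective equation-of-state parameter `w_eff(x,y,λ)`. -/
noncomputable def weff (ε ξ wm : ℝ) (z : ℝ → ℝ) (x y l : ℝ) : ℝ :=
  (Dfun ε ξ z l)⁻¹ *
    (-1 + ε*(1-6*ξ)*(1-wm)*x^2 + 2*ε*ξ*(1-3*wm)*(x + z l)^2
      + (1+wm)*(1-y^2) - 2*ε*ξ*(1-6*ξ)*(z l)^2 - 2*ξ*l*y^2*(z l))

/-- The Jacobian matrix `J_{ij} = ∂f_i/∂(j-th variable)` of `F` at the point `(x,y,λ)`. -/
noncomputable def Jmat (ε ξ wm : ℝ) (z : ℝ → ℝ) (x y l : ℝ) :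
    Matrix (Fin 3) (Fin 3) ℝ :=
  Matrix.of
    ![![deriv (fun t => f1 ε ξ wm z t y l) x,
        deriv (fun t => f1 ε ξ wm z x t l) y,
        deriv (fun t => f1 ε ξ wm z x y t) l],
      ![deriv (fun t => f2 ε ξ wm z t y l) x,
        deriv (fun t => f2 ε ξ wm z x t l) y,
        deriv (fun t => f2 ε ξ wm z x y t) l],
      ![deriv (fun t => f3 ε ξ z t y l) x,
        deriv (fun t => f3 ε ξ z x t l) y,
        deriv (fun t => f3 ε ξ z x y t) l]]

/-- The point 2b (slow-roll inflation),
`x* = 0`, `y* = √(2ξ(1−3w_m)/((1−6ξ)(2ξλ*z(λ*)+1+w_m)))`, with `z(λ*)² = 1/(6εξ(1−6ξ))`,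
is an equilibrium of the system. -/
theorem slowRoll_point_is_equilibrium (ε ξ wm : ℝ) (z : ℝ → ℝ) (lstar : ℝ)
    (hε : ε = 1 ∨ ε = -1) (hξ0 : ξ ≠ 0) (hξ6 : ξ ≠ 1/6)
    (hsign : 0 < ε*ξ*(1-6*ξ))
    (hz : DifferentiableAt ℝ z lstar) (hz' : deriv z lstar ≠ 0)
    (hl : (z lstar)^2 = 1/(6*ε*ξ*(1-6*ξ)))
    (hden : (1-6*ξ)*(2*ξ*lstar*(z lstar) + 1 + wm) ≠ 0)
    (hpos : 0 ≤ 2*ξ*(1-3*wm)/((1-6*ξ)*(2*ξ*lstar*(z lstar) + 1 + wm))) :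
    Fvec ε ξ wm z 0
      (Real.sqrt (2*ξ*(1-3*wm)/((1-6*ξ)*(2*ξ*lstar*(z lstar) + 1 + wm)))) lstar
      = (0, 0, 0) := by
  have hε2 : ε*ε = 1 := by rcases hε with rfl | rfl <;> norm_num
  have hεne : ε ≠ 0 := by rcases hε with rfl | rfl <;> norm_num
  have h6 : (1:ℝ)-6*ξ ≠ 0 := fun h => hden (by rw [h]; ring)
  have hd2 : 2*ξ*lstar*(z lstar) + 1 + wm ≠ 0 := fun h => hden (by rw [h]; ring)
  have hne : (6:ℝ)*ε*ξ*(1-6*ξ) ≠ 0 := by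
    intro h; exact ne_of_gt hsign (by linarith [h])
  have hy2 : (Real.sqrt (2*ξ*(1-3*wm)/((1-6*ξ)*(2*ξ*lstar*(z lstar) + 1 + wm))))^2
      = 2*ξ*(1-3*wm)/((1-6*ξ)*(2*ξ*lstar*(z lstar) + 1 + wm)) := Real.sq_sqrt hpos
  have hz2' : 6*ε*ξ*(1-6*ξ)*(z lstar)^2 = 1 := by
    rw [hl, mul_one_div, div_self hne]
  have hD : Dfun ε ξ z lstar = 0 := by
    unfold Dfun; linear_combination (-1) * hz2'
  have key : 2*ε*ξ*(1-3*wm)*(z lstar)^2 = (1-3*wm)/(3*(1-6*ξ)) := by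
    rw [eq_div_iff (by intro h; exact h6 (by linarith))]
    linear_combination (1-3*wm) * hz2'
  have hB : Bfun ε ξ wm z 0 (Real.sqrt (2*ξ*(1-3*wm)/((1-6*ξ)*(2*ξ*lstar*(z lstar) + 1 + wm)))) lstar = 0 := by
    unfold Bfun
    rw [hy2, zero_add, key]
    have h6' : (1:ℝ) - ξ*6 ≠ 0 := fun h => h6 (by linarith)
    field_simp
    ring_nf
  unfold Fvec f1 f2 f3
  rw [hD, hB]
  norm_num
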